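/- If H is a quasi-ideal of a Leibniz algebra L over a field F which is generated as a subalgebra by left Engel elements of L, then H is an ideal of L. -/
import Mathlib


/-! Basic definitions for (right) Leibniz algebras given by a bilinear bracket
on a vector space, following Towers, "Quasi-ideals of Leibniz algebras". -/

section LeibnizDefs

variable {F L : Type*} [Field F] [AddCommGroup L] [Module F L]

/-- The (right) Leibniz identity for a bilinear bracket `b`:
`[x,[y,z]] = [[x,y],z] - [[x,z],y]`. -/
def IsLeibniz (b : L →ₗ[F] L →ₗ[F] L) : Prop :=
  ∀ x y z : L, b x (b y z) = b (b x y) z - b (b x z) y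

/-- `[A,C]`: the span of all brackets `[a,c]` with `a ∈ A`, `c ∈ C`. -/
def bspan (b : L →ₗ[F] L →ₗ[F] L) (A C : Submodule F L) : Submodule F L :=
  Submodule.span F {z : L | ∃ a ∈ A, ∃ c ∈ C, z = b a c}

/-- A subalgebra is a subspace `H` with `[H,H] ⊆ H`. -/
def IsSubalgebra (b : L →ₗ[F] L →ₗ[F] L) (H : Submodule F L) : Prop :=
  bspan b H H ≤ H

/-- An ideal is a subspace `A` with `[A,L] + [L,A] ⊆ A`. -/
def IsIdeal (b : L →ₗ[F] L →ₗ[F] L) (A : Submodule F L) : Prop :=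
  bspan b A ⊤ ⊔ bspan b ⊤ A ≤ A

/-- A quasi-ideal of `L` is a subspace `H` with `[H,K] + [K,H] ⊆ H + K`
for every subspace `K` of `L`. -/
def IsQuasiIdeal (b : L →ₗ[F] L →ₗ[F] L) (H : Submodule F L) : Prop :=
  ∀ K : Submodule F L, bspan b H K ⊔ bspan b K H ≤ H ⊔ K

/-- `H` is a quasi-ideal of the subalgebra `E`: `H ⊆ E` and
`[H,K] + [K,H] ⊆ H + K` for every subspace `K` of `E`. -/
def IsQuasiIdealIn (b : L →ₗ[F] L →ₗ[F] L) (H E : Submodule F L) : Prop :=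
  H ≤ E ∧ ∀ K : Submodule F L, K ≤ E → bspan b H K ⊔ bspan b K H ≤ H ⊔ K

/-- `H` is an `m`-step subquasi-ideal of `L`: there is a chain of subalgebras
`H = H_m qu H_{m-1} qu ... qu H_0 = L`, each a quasi-ideal of the next.
(Here `C i` is `H_i`.) -/
def IsSubquasiIdealSteps (b : L →ₗ[F] L →ₗ[F] L) (m : ℕ) (H : Submodule F L) : Prop :=
  ∃ C : ℕ → Submodule F L, C 0 = ⊤ ∧ C m = H ∧
    (∀ i ≤ m, IsSubalgebra b (C i)) ∧
    ∀ i < m, IsQuasiIdealIn b (C (i + 1)) (C i)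

/-- `H` is a subquasi-ideal of `L` if it is an `m`-step subquasi-ideal for some `m`. -/
def IsSubquasiIdeal (b : L →ₗ[F] L →ₗ[F] L) (H : Submodule F L) : Prop :=
  ∃ m : ℕ, IsSubquasiIdealSteps b m H

/-- Lower central series: `lowerCentral b K n` is `K^{n+1}` in the paper's notation,
i.e. `K^1 = K`, `K^{k+1} = [K^k, K]`. -/
def lowerCentral (b : L →ₗ[F] L →ₗ[F] L) (K : Submodule F L) : ℕ → Submodule F L
  | 0 => K
  | n + 1 => bspan b (lowerCentral b K n) K

/-- Derived series: `derSeries b H n` is `H^{(n+1)}` in the paper's notation,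
i.e. `H^{(1)} = H`, `H^{(k+1)} = [H^{(k)}, H^{(k)}]`. -/
def derSeries (b : L →ₗ[F] L →ₗ[F] L) (H : Submodule F L) : ℕ → Submodule F L
  | 0 => H
  | n + 1 => bspan b (derSeries b H n) (derSeries b H n)

/-- The core `H_L` of `H`: the sum of all ideals of `L` contained in `H`. -/
def coreOf (b : L →ₗ[F] L →ₗ[F] L) (H : Submodule F L) : Submodule F L :=
  sSup {A : Submodule F L | IsIdeal b A ∧ A ≤ H}

/-- A derivation of the bracket `b`. -/
def IsDerivation (b : L →ₗ[F] L →ₗ[F] L) (d : L →ₗ[F] L) : Prop :=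
  ∀ x y : L, d (b x y) = b (d x) y + b x (d y)

/-- `I`: the span of all squares `[x,x]`, `x ∈ L`. -/
def sqSpan (b : L →ₗ[F] L →ₗ[F] L) : Submodule F L :=
  Submodule.span F {z : L | ∃ x : L, z = b x x}

/-- The centre `Z(L) = {z | [z,x] = [x,z] = 0 for all x}`. -/
def lcenter (b : L →ₗ[F] L →ₗ[F] L) : Submodule F L where
  carrier := {z : L | ∀ x : L, b z x = 0 ∧ b x z = 0}
  zero_mem' := by intro x; simp
  add_mem' := by
    intro y z hy hz x
    obtain ⟨h1, h2⟩ := hy x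
    obtain ⟨h3, h4⟩ := hz x
    constructor <;> simp [h1, h2, h3, h4]
  smul_mem' := by
    intro c z hz x
    obtain ⟨h1, h2⟩ := hz x
    constructor <;> simp [h1, h2]

/-- The centre of a subalgebra `E`, as a subspace of `L`:
`Z(E) = {z ∈ E | [z,x] = [x,z] = 0 for all x ∈ E}`. -/
def centerIn (b : L →ₗ[F] L →ₗ[F] L) (E : Submodule F L) : Submodule F L where
  carrier := {z : L | z ∈ E ∧ ∀ x ∈ E, b z x = 0 ∧ b x z = 0}
  zero_mem' := ⟨E.zero_mem, by intro x _; simp⟩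
  add_mem' := by
    intro y z hy hz
    refine ⟨E.add_mem hy.1 hz.1, fun x hx => ?_⟩
    obtain ⟨h1, h2⟩ := hy.2 x hx
    obtain ⟨h3, h4⟩ := hz.2 x hx
    constructor <;> simp [h1, h2, h3, h4]
  smul_mem' := by
    intro c z hz
    refine ⟨E.smul_mem c hz.1, fun x hx => ?_⟩
    obtain ⟨h1, h2⟩ := hz.2 x hx
    constructor <;> simp [h1, h2]

/-- The subalgebra generated by a set `S`. -/
def subalgGen (b : L →ₗ[F] L →ₗ[F] L) (S : Set L) : Submodule F L :=
  sInf {K : Submodule F L | IsSubalgebra b K ∧ S ⊆ K}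

/-- `x` is a left Engel element: for each `y` there is `n` with `R_x^n(y) = 0`,
where `R_x(y) = [y,x]`. -/
def IsLeftEngel (b : L →ₗ[F] L →ₗ[F] L) (x : L) : Prop :=
  ∀ y : L, ∃ n : ℕ, ((b.flip x) ^ n) y = 0

end LeibnizDefs

variable {F L : Type*} [Field F] [AddCommGroup L] [Module F L]

section Aux
variable {F L : Type*} [Field F] [AddCommGroup L] [Module F L]

lemma bspan_le' (b : L →ₗ[F] L →ₗ[F] L) {A C D : Submodule F L}
    (h : ∀ a ∈ A, ∀ c ∈ C, b a c ∈ D) : bspan b A C ≤ D := by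
  refine Submodule.span_le.2 ?_
  rintro z ⟨a, ha, c, hc, rfl⟩
  exact h a ha c hc

lemma mem_bspan (b : L →ₗ[F] L →ₗ[F] L) {A C : Submodule F L} {a c : L}
    (ha : a ∈ A) (hc : c ∈ C) : b a c ∈ bspan b A C :=
  Submodule.subset_span ⟨a, ha, c, hc, rfl⟩

end Aux

/-- If `H` is a quasi-ideal of a Leibniz algebra `L` which is generated
as a subalgebra by left Engel elements of `L`, then `H` is an ideal of `L`. -/
theorem quasiIdeal_isIdeal_of_leftEngel_generated (b : L →ₗ[F] L →ₗ[F] L)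
    (hb : IsLeibniz b) (S : Set L) (hS : ∀ x ∈ S, IsLeftEngel b x)
    (H : Submodule F L) (hgen : H = subalgGen b S) (hH : IsQuasiIdeal b H) :
    IsIdeal b H := by
  have hSH : S ⊆ (H : Set L) := by
    rw [hgen]
    intro x hx
    refine Submodule.mem_sInf.2 fun K hK => ?_
    exact hK.2 hx
  have hgenSub : ∀ K : Submodule F L, IsSubalgebra b K → S ⊆ K → H ≤ K := by
    intro K h1 h2
    rw [hgen]
    exact sInf_le ⟨h1, h2⟩
  have hHsub : ∀ h1 ∈ H, ∀ h2 ∈ H, b h1 h2 ∈ H := by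
    intro h1 h1H h2 h2H
    rw [hgen] at h1H h2H ⊢
    refine Submodule.mem_sInf.2 fun K hK => ?_
    exact hK.1 (mem_bspan b (Submodule.mem_sInf.1 h1H K hK) (Submodule.mem_sInf.1 h2H K hK))
  -- quasi-ideal decompositions
  have qiR : ∀ h ∈ H, ∀ z : L, ∃ h' ∈ H, ∃ c : F, b h z = h' + c • z := by
    intro h hh z
    have h1 : b h z ∈ H ⊔ Submodule.span F {z} := by
      refine hH (Submodule.span F {z}) (le_sup_left (a := bspan b H (Submodule.span F {z})) ?_)
      exact mem_bspan b hh (Submodule.mem_span_singleton_self z)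
    obtain ⟨p, hp, q, hq, heq⟩ := Submodule.mem_sup.1 h1
    obtain ⟨c, rfl⟩ := Submodule.mem_span_singleton.1 hq
    exact ⟨p, hp, c, heq.symm⟩
  have qiL : ∀ h ∈ H, ∀ z : L, ∃ h' ∈ H, ∃ c : F, b z h = h' + c • z := by
    intro h hh z
    have h1 : b z h ∈ H ⊔ Submodule.span F {z} := by
      refine hH (Submodule.span F {z}) (le_sup_right (b := bspan b (Submodule.span F {z}) H) ?_)
      exact mem_bspan b (Submodule.mem_span_singleton_self z) hh
    obtain ⟨p, hp, q, hq, heq⟩ := Submodule.mem_sup.1 h1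
    obtain ⟨c, rfl⟩ := Submodule.mem_span_singleton.1 hq
    exact ⟨p, hp, c, heq.symm⟩
  -- Step B: [L, S] ⊆ H, using the Engel condition
  have stepB : ∀ x ∈ S, ∀ z : L, b z x ∈ H := by
    intro x hx z
    by_cases hz : z ∈ H
    · exact hHsub z hz x (hSH hx)
    obtain ⟨h', hh', c, hc⟩ := qiL x (hSH hx) z
    by_cases hc0 : c = 0
    · rw [hc, hc0]
      simpa using hh'
    exfalso
    have key : ∀ n : ℕ, ∃ h ∈ H, ((b.flip x) ^ n) z = h + c ^ n • z := by
      intro n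
      induction n with
      | zero => exact ⟨0, H.zero_mem, by simp⟩
      | succ n ih =>
        obtain ⟨h, hh, he⟩ := ih
        refine ⟨b h x + c ^ n • h',
          H.add_mem (hHsub h hh x (hSH hx)) (H.smul_mem _ hh'), ?_⟩
        have : ((b.flip x) ^ (n + 1)) z = b (((b.flip x) ^ n) z) x := by
          rw [pow_succ', Module.End.mul_apply]
          rfl
        rw [this, he, map_add, map_smul, LinearMap.add_apply, LinearMap.smul_apply]
        rw [hc]
        rw [smul_add, smul_smul, ← pow_succ]
        abel
    obtain ⟨n, hn⟩ := hS x hx z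
    obtain ⟨h, hh, he⟩ := key n
    rw [hn] at he
    have hmem : c ^ n • z ∈ H := by
      have : c ^ n • z = -h := by
        rw [eq_neg_iff_add_eq_zero, add_comm]
        exact he.symm
      rw [this]
      exact H.neg_mem hh
    have : z ∈ H := by
      have h2 : (c ^ n)⁻¹ • (c ^ n • z) ∈ H := H.smul_mem _ hmem
      rwa [smul_smul, inv_mul_cancel₀ (pow_ne_zero n hc0), one_smul] at h2
    exact hz this
  -- Step C: [L, H] ⊆ H via a subalgebra containing S
  have stepC : ∀ h ∈ H, ∀ z : L, b z h ∈ H := by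
    have memH0 : ∀ w : L, w ∈ H ⊓ (⨅ z : L, H.comap (b z)) ↔
        w ∈ H ∧ ∀ z : L, b z w ∈ H := by
      intro w
      simp [Submodule.mem_inf, Submodule.mem_iInf, Submodule.mem_comap]
    have hH0sub : IsSubalgebra b (H ⊓ (⨅ z : L, H.comap (b z))) := by
      refine bspan_le' b ?_
      intro a ha c hc
      rw [memH0] at ha hc ⊢
      obtain ⟨haH, ha2⟩ := ha
      obtain ⟨hcH, hc2⟩ := hc
      refine ⟨hHsub a haH c hcH, fun z => ?_⟩
      rw [hb z a c]
      exact H.sub_mem (hHsub _ (ha2 z) c hcH) (hHsub _ (hc2 z) a haH)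
    have hS0 : S ⊆ (H ⊓ (⨅ z : L, H.comap (b z)) : Submodule F L) := by
      intro x hx
      exact (memH0 x).2 ⟨hSH hx, fun z => stepB x hx z⟩
    have hle : H ≤ H ⊓ (⨅ z : L, H.comap (b z)) := hgenSub _ hH0sub hS0
    intro h hh z
    exact ((memH0 h).1 (hle hh)).2 z
  -- Step D: [H, L] ⊆ H
  have stepD : ∀ h ∈ H, ∀ z : L, b h z ∈ H := by
    intro h hh z
    by_cases hz : z ∈ H
    · exact hHsub h hh z hz
    obtain ⟨h2, hh2, c, hc⟩ := qiR h hh z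
    have key : ∀ w : L, c • b w z ∈ H := by
      intro w
      have e1 : b w (b h z) = b (b w h) z - b (b w z) h := hb w h z
      have e2 : b w (b z h) = b (b w z) h - b (b w h) z := hb w z h
      have t1 : b (b w h) z ∈ H := by
        have e2' : b (b w h) z = b (b w z) h - b w (b z h) := by
          rw [e2]; abel
        rw [e2']
        exact H.sub_mem (stepC h hh (b w z)) (stepC _ (stepC h hh z) w)
      have e3 : b w (b h z) = b w h2 + c • b w z := by
        rw [hc, map_add, map_smul]
      have h4 : c • b w z + b w h2 = b (b w h) z - b (b w z) h := by
        rw [add_comm, ← e3, e1]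
      have t2 : c • b w z = b (b w h) z - b (b w z) h - b w h2 :=
        eq_sub_of_add_eq h4
      rw [t2]
      exact H.sub_mem (H.sub_mem t1 (stepC h hh (b w z))) (stepC h2 hh2 w)
    by_cases hc0 : c = 0
    · rw [hc, hc0]
      simpa using hh2
    exfalso
    have hm : (c * c) • z ∈ H := by
      have h5 := key h
      rw [hc, smul_add, smul_smul] at h5
      have : (c * c) • z = (c • h2 + (c * c) • z) - c • h2 := by abel
      rw [this]
      exact H.sub_mem h5 (H.smul_mem _ hh2)
    have : z ∈ H := by
      have h6 : (c * c)⁻¹ • ((c * c) • z) ∈ H := H.smul_mem _ hm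
      rwa [smul_smul, inv_mul_cancel₀ (mul_ne_zero hc0 hc0), one_smul] at h6
    exact hz this
  show bspan b H ⊤ ⊔ bspan b ⊤ H ≤ H
  refine sup_le (bspan_le' b ?_) (bspan_le' b ?_)
  · intro a ha z _
    exact stepD a ha z
  · intro z _ a ha
    exact stepC a ha z
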